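/- For 0 < 2r < t, the kernel k(t,r) := ∫_r^{t-r} (τ² - r²)^{-1/2}·((t-τ)² - r²)^{-1/2} dτ is finite and, after the change of variables τ = t/2 + (t/2 - r)·sin φ, equals ∫_{-π/2}^{π/2} ((t/2 + r)² - (t/2 - r)²·sin²φ)^{-1/2} dφ. -/

import Mathlib

open Real MeasureTheory intervalIntegral Set

/-- For `0 < 2r < t`, the kernel
`k(t,r) = ∫_r^{t-r} (τ² - r²)^{-1/2} ((t-τ)² - r²)^{-1/2} dτ` is finite
(the integrand is interval integrable despite its endpoint singularities), and after the
change of variables `τ = t/2 + (t/2 - r) sin φ` equals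
`∫_{-π/2}^{π/2} ((t/2 + r)² - (t/2 - r)² sin²φ)^{-1/2} dφ`. -/
theorem kernel_finite_and_substitution (t r : ℝ) (hr : 0 < r) (h2r : 2 * r < t) :
    IntervalIntegrable
        (fun τ => 1 / (Real.sqrt (τ ^ 2 - r ^ 2) * Real.sqrt ((t - τ) ^ 2 - r ^ 2)))
        volume r (t - r) ∧
      (∫ τ in r..(t - r),
          1 / (Real.sqrt (τ ^ 2 - r ^ 2) * Real.sqrt ((t - τ) ^ 2 - r ^ 2))) =
        ∫ φ in (-(π/2))..(π/2),
          1 / Real.sqrt ((t/2 + r) ^ 2 - (t/2 - r) ^ 2 * (Real.sin φ) ^ 2) := by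
  obtain ⟨a, b, ha_def, hb_def⟩ : ∃ a b : ℝ, a = t / 2 - r ∧ b = t / 2 + r := ⟨_, _, rfl, rfl⟩
  rw [← ha_def, ← hb_def]
  have ha : 0 < a := by rw [ha_def]; linarith
  have hb : 0 < b := by rw [hb_def]; linarith
  have hab : a < b := by rw [ha_def, hb_def]; linarith
  set g : ℝ → ℝ := fun φ => t / 2 + a * Real.sin φ with hg_def
  set F : ℝ → ℝ := fun τ => 1 / (Real.sqrt (τ ^ 2 - r ^ 2) * Real.sqrt ((t - τ) ^ 2 - r ^ 2))
    with hF_def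
  set h : ℝ → ℝ := fun φ => 1 / Real.sqrt (b ^ 2 - a ^ 2 * Real.sin φ ^ 2) with hh_def
  have hpos : ∀ φ : ℝ, 0 < b ^ 2 - a ^ 2 * Real.sin φ ^ 2 := by
    intro φ
    have h1 : Real.sin φ ^ 2 ≤ 1 := by
      rw [← Real.sin_sq_add_cos_sq φ]; nlinarith [sq_nonneg (Real.cos φ)]
    nlinarith
  have hg' : ∀ φ : ℝ, HasDerivAt g (a * Real.cos φ) φ := fun φ =>
    ((Real.hasDerivAt_sin φ).const_mul a).const_add (t / 2)
  have hinj : InjOn g (Ioo (-(π/2)) (π/2)) := by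
    intro x hx y hy hxy
    apply Real.injOn_sin (Ioo_subset_Icc_self hx) (Ioo_subset_Icc_self hy)
    simp only [hg_def] at hxy
    have : a * Real.sin x = a * Real.sin y := by linarith
    exact mul_left_cancel₀ ha.ne' this
  have hsin_mem : ∀ φ ∈ Ioo (-(π/2)) (π/2), -1 < Real.sin φ ∧ Real.sin φ < 1 := by
    intro φ hφ
    have hpi := Real.pi_pos
    constructor
    · have := Real.strictMonoOn_sin ⟨le_refl _, by linarith⟩ (Ioo_subset_Icc_self hφ) hφ.1
      simpa using this
    · have := Real.strictMonoOn_sin (Ioo_subset_Icc_self hφ) ⟨by linarith, le_refl _⟩ hφ.2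
      simpa using this
  have himage : g '' Ioo (-(π/2)) (π/2) = Ioo r (t - r) := by
    ext y
    constructor
    · rintro ⟨φ, hφ, rfl⟩
      obtain ⟨h1, h2⟩ := hsin_mem φ hφ
      constructor
      · simp only [hg_def]; nlinarith [ha_def]
      · simp only [hg_def]; nlinarith [ha_def]
    · rintro ⟨hy1, hy2⟩
      have ha' : r - t/2 < y - t/2 := by linarith
      have hlt1 : -1 < (y - t/2) / a := by
        rw [lt_div_iff₀ ha]; rw [ha_def]; linarith
      have hlt2 : (y - t/2) / a < 1 := by
        rw [div_lt_iff₀ ha]; rw [ha_def]; linarith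
      refine ⟨Real.arcsin ((y - t/2)/a), ⟨?_, ?_⟩, ?_⟩
      · exact Real.neg_pi_div_two_lt_arcsin.2 hlt1
      · exact Real.arcsin_lt_pi_div_two.2 hlt2
      · simp only [hg_def]
        rw [Real.sin_arcsin hlt1.le hlt2.le]
        field_simp
        ring
  have hkey : ∀ φ ∈ Ioo (-(π/2)) (π/2),
      |a * Real.cos φ| • F (g φ) = h φ := by
    intro φ hφ
    have hc : 0 < Real.cos φ := Real.cos_pos_of_mem_Ioo hφ
    have hcs : Real.cos φ ^ 2 = 1 - Real.sin φ ^ 2 := by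
      have := Real.sin_sq_add_cos_sq φ; linarith
    set s := Real.sin φ with hs_def
    set c := Real.cos φ with hc_def
    have e1 : (g φ) ^ 2 - r ^ 2 = (a * (1 + s)) * (b + a * s) := by
      simp only [hg_def, ha_def, hb_def, hs_def]; ring
    have e2 : (t - g φ) ^ 2 - r ^ 2 = (a * (1 - s)) * (b - a * s) := by
      simp only [hg_def, ha_def, hb_def, hs_def]; ring
    have hs1 : -1 ≤ s := Real.neg_one_le_sin φ
    have hs2 : s ≤ 1 := Real.sin_le_one φ
    have hX : 0 < b ^ 2 - a ^ 2 * s ^ 2 := hpos φ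
    have hb1 : 0 < b + a * s := by nlinarith
    have hb2 : 0 < b - a * s := by nlinarith
    have hsqrt : Real.sqrt ((g φ) ^ 2 - r ^ 2) * Real.sqrt ((t - g φ) ^ 2 - r ^ 2)
        = (a * c) * Real.sqrt (b ^ 2 - a ^ 2 * s ^ 2) := by
      rw [e1, e2, ← Real.sqrt_mul (mul_nonneg (mul_nonneg ha.le (by linarith)) hb1.le)]
      have heq : a * (1 + s) * (b + a * s) * (a * (1 - s) * (b - a * s))
          = (a * c) ^ 2 * (b ^ 2 - a ^ 2 * s ^ 2) := by
        linear_combination (-(a^2) * (b ^ 2 - a ^ 2 * s ^ 2)) * hcs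
      rw [heq, Real.sqrt_mul (by positivity), Real.sqrt_sq (by positivity)]
    simp only [hF_def, hh_def, smul_eq_mul, hsqrt]
    rw [abs_of_pos (by positivity)]
    have hsX : 0 < Real.sqrt (b ^ 2 - a ^ 2 * s ^ 2) := Real.sqrt_pos.2 hX
    field_simp
    rw [← hs_def, div_self hsX.ne']
  have hhc : Continuous h := by
    apply continuous_const.div
    · exact (continuous_const.sub (continuous_const.mul
        (Real.continuous_sin.pow 2))).sqrt
    · intro φ
      exact (Real.sqrt_pos.2 (hpos φ)).ne'
  have hIoo_meas : MeasurableSet (Ioo (-(π/2)) (π/2) : Set ℝ) := measurableSet_Ioo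
  have hle2 : -(π/2) ≤ (π/2 : ℝ) := by linarith [Real.pi_pos]
  have hint_h : IntegrableOn h (Ioo (-(π/2)) (π/2)) :=
    (intervalIntegrable_iff_integrableOn_Ioo_of_le hle2).1
      (hhc.intervalIntegrable _ _)
  have hint_comp : IntegrableOn (fun φ => |a * Real.cos φ| • F (g φ))
      (Ioo (-(π/2)) (π/2)) :=
    hint_h.congr_fun (fun φ hφ => (hkey φ hφ).symm) hIoo_meas
  have hderiv : ∀ φ ∈ Ioo (-(π/2)) (π/2),
      HasDerivWithinAt g (a * Real.cos φ) (Ioo (-(π/2)) (π/2)) φ :=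
    fun φ _ => (hg' φ).hasDerivWithinAt
  have hintF : IntegrableOn F (Ioo r (t - r)) := by
    rw [← himage]
    exact (integrableOn_image_iff_integrableOn_abs_deriv_smul hIoo_meas hderiv hinj F).2
      hint_comp
  have hle : r ≤ t - r := by linarith
  constructor
  · exact (intervalIntegrable_iff_integrableOn_Ioo_of_le hle).2 hintF
  · rw [intervalIntegral.integral_of_le hle, intervalIntegral.integral_of_le hle2,
      MeasureTheory.integral_Ioc_eq_integral_Ioo, MeasureTheory.integral_Ioc_eq_integral_Ioo,
      ← himage,
      integral_image_eq_integral_abs_deriv_smul hIoo_meas hderiv hinj F]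
    exact setIntegral_congr_fun hIoo_meas hkey
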